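/- Let $B$ be a Banach space, $F$ a finite dimensional normed vector space, $X$ a topological space, $s: X \to \mathrm{Emb}(F, B)$ a continuous family of linear embeddings (with the operator norm topology), and $x_0 \in X$. Then there is a neighborhood $U$ of $x_0$ and a continuous map $t: U \to \mathrm{Aut}(B)$ into the continuous linear automorphisms of $B$ such that $t(x) \circ s(x) = s(x_0)$ for all $x \in U$. -/

import Mathlib

open scoped Topology

/-- Auxiliary construction: if `p` is a left inverse of `sx0` and `r` is a two-sided inverse
of `p ∘ sx`, then `id + (sx0 - sx) ∘ r ∘ p` is an automorphism of `B` carrying `sx` to `sx0`. -/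
lemma stmt5_aux {B F : Type*}
    [NormedAddCommGroup B] [NormedSpace ℝ B]
    [NormedAddCommGroup F] [NormedSpace ℝ F]
    (sx0 sx : F →L[ℝ] B) (p : B →L[ℝ] F) (r : F →L[ℝ] F)
    (hp : ∀ v, p (sx0 v) = v) (hgr : ∀ v, p (sx (r v)) = v)
    (hrg : ∀ v, r (p (sx v)) = v) :
    ∃ t : B ≃L[ℝ] B,
      (t : B →L[ℝ] B) = ContinuousLinearMap.id ℝ B + (sx0 - sx).comp (r.comp p) ∧
      (t : B →L[ℝ] B).comp sx = sx0 := by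
  set a : F →L[ℝ] B := sx0 - sx with ha
  have hpa : ∀ v, p (a v) = v - p (sx v) := by
    intro v
    rw [ha, ContinuousLinearMap.sub_apply, map_sub, hp]
  set fwd : B →L[ℝ] B := ContinuousLinearMap.id ℝ B + a.comp (r.comp p) with hfwd
  set bwd : B →L[ℝ] B := ContinuousLinearMap.id ℝ B - a.comp p with hbwd
  have efwd : ∀ b, fwd b = b + a (r (p b)) := fun b => rfl
  have ebwd : ∀ b, bwd b = b - a (p b) := fun b => rfl
  have h1 : ∀ b, bwd (fwd b) = b := by
    intro b
    rw [efwd, ebwd]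
    have : p (b + a (r (p b))) = r (p b) := by
      rw [map_add, hpa, hgr]
      abel
    rw [this]
    abel
  have h2 : ∀ b, fwd (bwd b) = b := by
    intro b
    rw [ebwd, efwd]
    have : p (b - a (p b)) = p (sx (p b)) := by
      rw [map_sub, hpa]
      abel
    rw [this, hrg]
    abel
  refine ⟨ContinuousLinearEquiv.equivOfInverse fwd bwd h1 h2, rfl, ?_⟩
  ext v
  have : fwd (sx v) = sx v + a (r (p (sx v))) := efwd _
  rw [ContinuousLinearMap.comp_apply]
  show fwd (sx v) = sx0 v
  rw [this, hrg, ha, ContinuousLinearMap.sub_apply]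
  abel

/-- Local trivialization of continuous families of finite-dimensional embeddings into
a Banach space: given a continuous family `s : X → (F →L[ℝ] B)` of injective linear maps
with `F` finite dimensional and `B` Banach, near any `x₀` there is a continuous family of
automorphisms `t x` of `B` with `t x ∘ s x = s x₀`. -/
theorem stmt5 {B F X : Type*}
    [NormedAddCommGroup B] [NormedSpace ℝ B] [CompleteSpace B]
    [NormedAddCommGroup F] [NormedSpace ℝ F] [FiniteDimensional ℝ F]
    [TopologicalSpace X]
    (s : X → F →L[ℝ] B) (hs : Continuous s)
    (hinj : ∀ x, Function.Injective (s x)) (x0 : X) :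
    ∃ U ∈ 𝓝 x0, ∃ t : X → B ≃L[ℝ] B,
      (Continuous fun x : U => (t (x : X) : B →L[ℝ] B)) ∧
      ∀ x ∈ U, (t x : B →L[ℝ] B).comp (s x) = s x0 := by
  classical
  -- The range of `s x0` is a finite-dimensional, hence closed complemented, subspace of `B`.
  haveI : FiniteDimensional ℝ (LinearMap.range (s x0 : F →ₗ[ℝ] B)) :=
    Module.Finite.range (s x0 : F →ₗ[ℝ] B)
  obtain ⟨π, hπ⟩ :=
    Submodule.ClosedComplemented.of_finiteDimensional (LinearMap.range (s x0 : F →ₗ[ℝ] B))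
  -- `e : F ≃ₗ R` induced by `s x0`.
  let e : F ≃ₗ[ℝ] LinearMap.range (s x0 : F →ₗ[ℝ] B) :=
    LinearEquiv.ofInjective (s x0 : F →ₗ[ℝ] B) (hinj x0)
  -- `p : B →L F` a continuous left inverse of `s x0`.
  let p : B →L[ℝ] F := (LinearMap.toContinuousLinearMap e.symm.toLinearMap).comp π
  have hp : ∀ v : F, p (s x0 v) = v := by
    intro v
    have h1 : π (s x0 v) = e v := by
      have h2 : (e v : B) = s x0 v := rfl
      rw [← h2, hπ]
    show LinearMap.toContinuousLinearMap e.symm.toLinearMap (π (s x0 v)) = v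
    rw [h1]
    show e.symm (e v) = v
    exact e.symm_apply_apply v
  -- the family `g x = p ∘ s x : F →L F`, with `g x0 = id`.
  have hgc : Continuous fun x => p.comp (s x) := hs.const_clm_comp p
  have hg0 : p.comp (s x0) = ContinuousLinearMap.id ℝ F := by
    ext v
    exact hp v
  -- the neighborhood where `g x` is invertible
  set U : Set X := (fun x => p.comp (s x)) ⁻¹' {u : F →L[ℝ] F | IsUnit u} with hU
  have hUopen : IsOpen U := Units.isOpen.preimage hgc
  have hx0U : x0 ∈ U := by
    simp only [hU, Set.mem_preimage, Set.mem_setOf_eq, hg0]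
    exact isUnit_one
  have main : ∀ x ∈ U, ∃ t : B ≃L[ℝ] B,
      (t : B →L[ℝ] B) = ContinuousLinearMap.id ℝ B +
        (s x0 - s x).comp ((Ring.inverse (p.comp (s x))).comp p) ∧
      (t : B →L[ℝ] B).comp (s x) = s x0 := by
    intro x hx
    have hu : IsUnit (p.comp (s x)) := hx
    have hgr : ∀ v, p (s x (Ring.inverse (p.comp (s x)) v)) = v := by
      intro v
      have h : p.comp (s x) * Ring.inverse (p.comp (s x)) = 1 :=
        Ring.mul_inverse_cancel _ hu
      calc p (s x (Ring.inverse (p.comp (s x)) v))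
          = (p.comp (s x) * Ring.inverse (p.comp (s x))) v := rfl
        _ = v := by rw [h]; rfl
    have hrg : ∀ v, Ring.inverse (p.comp (s x)) (p (s x v)) = v := by
      intro v
      have h : Ring.inverse (p.comp (s x)) * p.comp (s x) = 1 :=
        Ring.inverse_mul_cancel _ hu
      calc Ring.inverse (p.comp (s x)) (p (s x v))
          = (Ring.inverse (p.comp (s x)) * p.comp (s x)) v := rfl
        _ = v := by rw [h]; rfl
    exact stmt5_aux (s x0) (s x) p (Ring.inverse (p.comp (s x))) hp hgr hrg
  let t : X → B ≃L[ℝ] B := fun x =>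
    if hx : x ∈ U then (main x hx).choose else ContinuousLinearEquiv.refl ℝ B
  have ht : ∀ x (hx : x ∈ U),
      (t x : B →L[ℝ] B) = ContinuousLinearMap.id ℝ B +
        (s x0 - s x).comp ((Ring.inverse (p.comp (s x))).comp p) ∧
      (t x : B →L[ℝ] B).comp (s x) = s x0 := by
    intro x hx
    have : t x = (main x hx).choose := dif_pos hx
    rw [this]
    exact (main x hx).choose_spec
  refine ⟨U, hUopen.mem_nhds hx0U, t, ?_, fun x hx => (ht x hx).2⟩
  have hcont : Continuous fun x : U => ContinuousLinearMap.id ℝ B +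
      (s x0 - s (x : X)).comp ((Ring.inverse (p.comp (s (x : X)))).comp p) := by
    have hsub : Continuous fun x : U => s x0 - s (x : X) :=
      continuous_const.sub (hs.comp continuous_subtype_val)
    have hinv : Continuous fun x : U => Ring.inverse (p.comp (s (x : X))) := by
      rw [continuous_iff_continuousAt]
      rintro ⟨x, hx⟩
      have hu : IsUnit (p.comp (s x)) := hx
      obtain ⟨u, hu'⟩ := hu
      have hca : ContinuousAt Ring.inverse (p.comp (s x)) := by
        rw [← hu']
        exact NormedRing.inverse_continuousAt u
      have h2 : ContinuousAt (fun x : U => p.comp (s (x : X))) ⟨x, hx⟩ :=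
        (hgc.comp continuous_subtype_val).continuousAt
      exact ContinuousAt.comp (x := (⟨x, hx⟩ : U)) hca h2
    exact continuous_const.add (hsub.clm_comp (hinv.clm_comp_const p))
  have heq : (fun x : U => (t (x : X) : B →L[ℝ] B)) =
      fun x : U => ContinuousLinearMap.id ℝ B +
        (s x0 - s (x : X)).comp ((Ring.inverse (p.comp (s (x : X)))).comp p) := by
    funext x
    exact (ht x x.2).1
  rw [heq]
  exact hcont
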